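/- Let n be odd and let k be a positive integer with gcd(k, n) = 1. Then for every nonempty subset T of the nonzero elements of L = GF(2^n) with |T| <= 6, the three sums \sum_{x \in T} x, \sum_{x \in T} x^{2^k+1} and \sum_{x \in T} x^{2^{2k}+1} are not all zero. (Equivalently, the binary code with parity checks x, x^{2^k+1}, x^{2^{2k}+1} has minimum distance at least 7.) -/

import Mathlib

/-- If `gcd(a,b)=1` then `2^a-1` and `2^b-1` are coprime. -/
theorem aux_coprime_sub' {a b : ℕ} (h : Nat.Coprime a b) :
    Nat.Coprime (2 ^ a - 1) (2 ^ b - 1) := by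
  rw [Nat.coprime_iff_gcd_eq_one]
  by_contra hg
  obtain ⟨p, hp, hpd⟩ := Nat.exists_prime_and_dvd hg
  have h1 : p ∣ 2 ^ a - 1 := hpd.trans (Nat.gcd_dvd_left _ _)
  have h2 : p ∣ 2 ^ b - 1 := hpd.trans (Nat.gcd_dvd_right _ _)
  haveI : Fact p.Prime := ⟨hp⟩
  have key : ∀ m : ℕ, p ∣ 2 ^ m - 1 → (2 : ZMod p) ^ m = 1 := by
    intro m hm
    have h0 : ((2 ^ m - 1 : ℕ) : ZMod p) = 0 := (ZMod.natCast_eq_zero_iff _ _).2 hm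
    have h2m : (1 : ℕ) ≤ 2 ^ m := Nat.one_le_two_pow
    rw [Nat.cast_sub h2m] at h0
    push_cast at h0
    linear_combination h0
  have e1 := key a h1
  have e2 := key b h2
  have d1 : orderOf (2 : ZMod p) ∣ a := orderOf_dvd_of_pow_eq_one e1
  have d2 : orderOf (2 : ZMod p) ∣ b := orderOf_dvd_of_pow_eq_one e2
  have : orderOf (2 : ZMod p) ∣ 1 := by
    have := Nat.dvd_gcd d1 d2; rwa [Nat.Coprime.gcd_eq_one h] at this
  have h21 : (2 : ZMod p) = 1 := by
    have ho : orderOf (2 : ZMod p) = 1 := Nat.eq_one_of_dvd_one this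
    exact orderOf_eq_one_iff.mp ho
  have hone : ((1 : ℕ) : ZMod p) = 0 := by
    have h10 : (1 : ZMod p) = 0 := by linear_combination h21
    simpa using h10
  rw [ZMod.natCast_eq_zero_iff] at hone
  exact hp.one_lt.ne' (Nat.dvd_one.mp hone)



section FieldLemmas

variable {n : ℕ}

local notation "L" => GaloisField 2 n

/-- The unit group of `GaloisField 2 n` has `2^n - 1` elements; any unit whose order
is coprime to that is trivial when raised appropriately. -/
theorem aux_pow_eq_one (hn0 : n ≠ 0) {m : ℕ} (hc : Nat.Coprime m (2 ^ n - 1)) (x : L)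
    (hx : x ≠ 0) (hpow : x ^ m = 1) : x = 1 := by
  have hcard : Nat.card Lˣ = 2 ^ n - 1 := by
    rw [Nat.card_units, GaloisField.card 2 n hn0]
  set u : Lˣ := Units.mk0 x hx with hu
  have hupow : u ^ m = 1 := by
    ext
    push_cast
    simpa [hu] using hpow
  have d1 : orderOf u ∣ m := orderOf_dvd_of_pow_eq_one hupow
  have d2 : orderOf u ∣ 2 ^ n - 1 := hcard ▸ orderOf_dvd_natCard u
  have : orderOf u ∣ 1 := hc ▸ Nat.dvd_gcd d1 d2
  have hu1 : u = 1 := orderOf_eq_one_iff.mp (Nat.eq_one_of_dvd_one this)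
  have := congrArg (Units.val) hu1
  simpa [hu] using this

/-- injectivity of `x ↦ x^(2^k-1)` phrased multiplicatively -/
theorem aux_inj_sub (hn0 : n ≠ 0) (hcs : Nat.Coprime (2 ^ k - 1) (2 ^ n - 1)) {x y : L} (hx : x ≠ 0) (hy : y ≠ 0)
    (h : x ^ 2 ^ k * y = x * y ^ 2 ^ k) : x = y := by
  have h1 : (1 : ℕ) ≤ 2 ^ k := Nat.one_le_two_pow
  have hxe : x ^ 2 ^ k = x ^ (2 ^ k - 1) * x := by
    rw [← pow_succ]
    congr 1
    omega
  have hye : y ^ 2 ^ k = y ^ (2 ^ k - 1) * y := by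
    rw [← pow_succ]
    congr 1
    omega
  rw [hxe, hye] at h
  have hxy : x ^ (2 ^ k - 1) = y ^ (2 ^ k - 1) := by
    have hne : x * y ≠ 0 := mul_ne_zero hx hy
    apply mul_right_cancel₀ hne
    calc x ^ (2 ^ k - 1) * (x * y) = x ^ (2 ^ k - 1) * x * y := by ring
    _ = x * (y ^ (2 ^ k - 1) * y) := h
    _ = y ^ (2 ^ k - 1) * (x * y) := by ring
  have hq : (x / y) ^ (2 ^ k - 1) = 1 := by
    rw [div_pow, hxy, div_self (pow_ne_zero _ hy)]
  have h2 := aux_pow_eq_one hn0 hcs (x / y) (div_ne_zero hx hy) hq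
  field_simp at h2
  exact h2

/-- kernel of `x ↦ x^(2^k) - x` is `{0,1}` -/
theorem aux_ker (hn0 : n ≠ 0) (hcs : Nat.Coprime (2 ^ k - 1) (2 ^ n - 1)) {x : L} (h : x ^ 2 ^ k = x) : x = 0 ∨ x = 1 := by
  rcases eq_or_ne x 0 with rfl | hx
  · exact Or.inl rfl
  · refine Or.inr (aux_inj_sub hn0 hcs hx one_ne_zero ?_)
    simp [h]


variable {k : ℕ}

local notation "ψ" => iterateFrobenius (GaloisField 2 n) 2 k

theorem aux_core (hn0 : n ≠ 0) (hcs : Nat.Coprime (2 ^ k - 1) (2 ^ n - 1))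
    (htwo : (2 : L) = 0)
    {r t u : L} (hr : r ≠ 0) (ht0 : t ≠ 0) (ht1 : t ≠ 1) (hu0 : u ≠ 0) (hu1 : u ≠ 1)
    (hi : r * ψ r * (ψ u + u) = ψ t + t)
    (hii : r * ψ (ψ r) * (ψ (ψ u + u) + (ψ u + u)) = ψ (ψ t + t) + (ψ t + t)) :
    (r = 1 ∧ (u = t ∨ u = t + 1)) ∨ ((t = r ∨ t = r + 1) ∧ (u = r⁻¹ ∨ u = r⁻¹ + 1)) := by
  have hψdef : ∀ x : L, ψ x = x ^ 2 ^ k := fun x => iterateFrobenius_def 2 k x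
  have hker : ∀ x : L, ψ x = x → x = 0 ∨ x = 1 := by
    intro x hx
    exact aux_ker hn0 hcs (by rw [← hψdef]; exact hx)
  have hψne : ∀ x : L, x ≠ 0 → ψ x ≠ 0 := by
    intro x hx
    rw [hψdef]
    exact pow_ne_zero _ hx
  -- the two theta values are nonzero
  have hδ0 : ψ u + u ≠ 0 := by
    intro hd
    have : ψ u = u := by linear_combination hd - u * htwo
    rcases hker u this with h | h
    · exact hu0 h
    · exact hu1 h
  have hα0 : ψ t + t ≠ 0 := by
    intro hd
    have : ψ t = t := by linear_combination hd - t * htwo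
    rcases hker t this with h | h
    · exact ht0 h
    · exact ht1 h
  by_cases hr1 : r = 1
  · -- r = 1 : δ = α
    subst hr1
    left
    refine ⟨rfl, ?_⟩
    rw [map_one, one_mul, one_mul] at hi
    have hfix : ψ (t + u) = t + u := by
      rw [map_add]
      linear_combination - hi + (ψ u - t) * htwo
    rcases hker _ hfix with h | h
    · left
      linear_combination h - t * htwo
    · right
      linear_combination h - t * htwo
  · -- main branch
    right
    have hψr0 : ψ r ≠ 0 := hψne r hr
    have hψψr0 : ψ (ψ r) ≠ 0 := hψne _ hψr0
    have hm0 : ψ r + r ≠ 0 := by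
      intro hd
      have : ψ r = r := by linear_combination hd - r * htwo
      rcases hker r this with h | h
      · exact hr h
      · exact hr1 h
    have hψα : ψ (ψ t + t) = ψ r * ψ (ψ r) * ψ (ψ u + u) := by
      rw [← hi, map_mul, map_mul]
    have key : ψ (ψ u + u) * (ψ (ψ r) * (ψ r + r)) = (ψ u + u) * (r * (ψ (ψ r) + ψ r)) := by
      have hii' := hii
      rw [hψα, ← hi] at hii'
      linear_combination hii' + (ψ r * ψ (ψ r) * ψ (ψ u + u) - r * ψ (ψ r) * (ψ u + u)) * htwo
    -- δ = (ψ r + r) / (r * ψ r)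
    have hδval : ψ u + u = (ψ r + r) / (r * ψ r) := by
      have hδ'0 : (ψ r + r) / (r * ψ r) ≠ 0 := div_ne_zero hm0 (mul_ne_zero hr hψr0)
      rw [map_add] at key
      apply aux_inj_sub hn0 hcs hδ0 hδ'0
      rw [← hψdef, ← hψdef]
      simp only [map_div₀, map_add, map_mul]
      field_simp
      linear_combination key
    have hαval : ψ t + t = ψ r + r := by
      rw [← hi, hδval]
      field_simp
    -- t = r or t = r + 1
    have hfix1 : ψ (t + r) = t + r := by
      rw [map_add]
      linear_combination hαval + (ψ r - t) * htwo
    have hfix2 : ψ (u + r⁻¹) = u + r⁻¹ := by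
      rw [map_add, map_inv₀]
      have hδ'' : ψ u + u = r⁻¹ + (ψ r)⁻¹ := by
        rw [hδval]
        field_simp
      linear_combination hδ'' + ((ψ r)⁻¹ - u) * htwo
    constructor
    · rcases hker _ hfix1 with h | h
      · left; linear_combination h - r * htwo
      · right; linear_combination h - r * htwo
    · rcases hker _ hfix2 with h | h
      · left; linear_combination h - r⁻¹ * htwo
      · right; linear_combination h - r⁻¹ * htwo

theorem aux_ML (hn0 : n ≠ 0) (hcs : Nat.Coprime (2 ^ k - 1) (2 ^ n - 1))
    (htwo : (2 : L) = 0)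
    {a b c d : L} (ha : a ≠ 0) (hb : b ≠ 0) (hab : a ≠ b)
    (hc : c ≠ 0) (hd : d ≠ 0) (hcd : c ≠ d)
    (h1 : ψ a * b + a * ψ b = ψ c * d + c * ψ d)
    (h2 : ψ (ψ a) * b + a * ψ (ψ b) = ψ (ψ c) * d + c * ψ (ψ d)) :
    (c = a ∨ c = b ∨ c = a + b) ∧ (d = a ∨ d = b ∨ d = a + b) := by
  have hψne : ∀ x : L, x ≠ 0 → ψ x ≠ 0 := by
    intro x hx
    rw [iterateFrobenius_def]
    exact pow_ne_zero _ hx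
  have hψa := hψne a ha
  have hψc := hψne c hc
  have hψψa := hψne _ hψa
  have hexp : ∀ x y : L, x ≠ 0 → x * ψ x * (ψ (y / x) + y / x) = ψ x * y + x * ψ y := by
    intro x y hx
    have hψx := hψne x hx
    rw [map_div₀]
    field_simp
    ring
  have hexp2 : ∀ x y : L, x ≠ 0 →
      x * ψ (ψ x) * (ψ (ψ (y / x) + y / x) + (ψ (y / x) + y / x)) = ψ (ψ x) * y + x * ψ (ψ y) := by
    intro x y hx
    have hψx := hψne x hx
    have hψψx := hψne _ hψx
    rw [map_add, map_div₀, map_div₀]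
    field_simp
    linear_combination (x * ψ (ψ x) * ψ y) * htwo
  set t := b / a with htdef
  set u := d / c with hudef
  set r := c / a with hrdef
  have ht0 : t ≠ 0 := div_ne_zero hb ha
  have hu0 : u ≠ 0 := div_ne_zero hd hc
  have hr0 : r ≠ 0 := div_ne_zero hc ha
  have ht1 : t ≠ 1 := by
    intro h
    rw [htdef, div_eq_one_iff_eq ha] at h
    exact hab h.symm
  have hu1 : u ≠ 1 := by
    intro h
    rw [hudef, div_eq_one_iff_eq hc] at h
    exact hcd h.symm
  have hi : r * ψ r * (ψ u + u) = ψ t + t := by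
    apply mul_left_cancel₀ (mul_ne_zero ha hψa)
    calc (a * ψ a) * (r * ψ r * (ψ u + u))
        = c * ψ c * (ψ (d / c) + d / c) := by
          rw [hudef, hrdef, map_div₀]
          field_simp
      _ = ψ c * d + c * ψ d := hexp c d hc
      _ = ψ a * b + a * ψ b := h1.symm
      _ = a * ψ a * (ψ (b / a) + b / a) := (hexp a b ha).symm
      _ = (a * ψ a) * (ψ t + t) := by rw [htdef]
  have hii : r * ψ (ψ r) * (ψ (ψ u + u) + (ψ u + u)) = ψ (ψ t + t) + (ψ t + t) := by
    apply mul_left_cancel₀ (mul_ne_zero ha hψψa)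
    calc (a * ψ (ψ a)) * (r * ψ (ψ r) * (ψ (ψ u + u) + (ψ u + u)))
        = c * ψ (ψ c) * (ψ (ψ (d / c) + d / c) + (ψ (d / c) + d / c)) := by
          rw [hudef, hrdef, map_div₀, map_div₀]
          field_simp
      _ = ψ (ψ c) * d + c * ψ (ψ d) := hexp2 c d hc
      _ = ψ (ψ a) * b + a * ψ (ψ b) := h2.symm
      _ = a * ψ (ψ a) * (ψ (ψ (b / a) + b / a) + (ψ (b / a) + b / a)) := (hexp2 a b ha).symm
      _ = (a * ψ (ψ a)) * (ψ (ψ t + t) + (ψ t + t)) := by rw [htdef]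
  rcases aux_core hn0 hcs htwo hr0 ht0 ht1 hu0 hu1 hi hii with ⟨hr1, hu⟩ | ⟨ht, hu⟩
  · have hca : c = a := by
      rw [hrdef, div_eq_one_iff_eq ha] at hr1
      exact hr1
    refine ⟨Or.inl hca, ?_⟩
    rcases hu with h | h
    · refine Or.inr (Or.inl ?_)
      rw [hudef, htdef, hca] at h
      field_simp at h
      exact h
    · refine Or.inr (Or.inr ?_)
      rw [hudef, htdef, hca] at h
      field_simp at h
      linear_combination h
  · have hcval : c = b ∨ c = a + b := by
      rcases ht with h | h
      · left
        rw [htdef, hrdef] at h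
        field_simp at h
        exact h.symm
      · right
        rw [htdef, hrdef] at h
        field_simp at h
        linear_combination - h - a * htwo
    have hdval : d = a ∨ d = a + c := by
      rcases hu with h | h
      · left
        rw [hudef, hrdef, inv_div] at h
        field_simp at h
        exact h
      · right
        rw [hudef, hrdef, inv_div] at h
        field_simp at h
        linear_combination h
    constructor
    · rcases hcval with h | h
      · exact Or.inr (Or.inl h)
      · exact Or.inr (Or.inr h)
    · rcases hdval with h | h
      · exact Or.inl h
      · rcases hcval with h' | h'
        · rw [h'] at h
          exact Or.inr (Or.inr (by linear_combination h))
        · rw [h'] at h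
          refine Or.inr (Or.inl ?_)
          linear_combination h + a * htwo

theorem aux_coprime_sub {a b : ℕ} (h : Nat.gcd a b = 1) :
    Nat.Coprime (2 ^ a - 1) (2 ^ b - 1) := aux_coprime_sub' h

theorem stmt_4 (n k : ℕ) (hn : Odd n) (hk : 0 < k) (hkn : Nat.gcd k n = 1)
    (T : Finset (GaloisField 2 n)) (hT : T.Nonempty) (hT0 : ∀ x ∈ T, x ≠ 0)
    (hcard : T.card ≤ 6) :
    ¬((∑ x ∈ T, x) = 0 ∧ (∑ x ∈ T, x ^ (2 ^ k + 1)) = 0 ∧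
      (∑ x ∈ T, x ^ (2 ^ (2 * k) + 1)) = 0) := by
  classical
  rintro ⟨E0, E1, E2⟩
  set Φ : GaloisField 2 n →+* GaloisField 2 n := iterateFrobenius (GaloisField 2 n) 2 k with hΦ
  have hn0 : n ≠ 0 := by
    rcases hn with ⟨m, hm⟩
    omega
  have htwo : (2 : GaloisField 2 n) = 0 := by
    have := CharP.cast_eq_zero (GaloisField 2 n) 2
    simpa using this
  have h2n : ¬ (2 ∣ n) := by
    rcases hn with ⟨m, hm⟩
    omega
  have hcop2 : Nat.Coprime 2 n := (Nat.prime_two.coprime_iff_not_dvd).mpr h2n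
  have hcs : Nat.Coprime (2 ^ k - 1) (2 ^ n - 1) := aux_coprime_sub hkn
  have hpow1 : ∀ x : GaloisField 2 n, x ^ (2 ^ k + 1) = Φ x * x := fun x => by
    rw [pow_succ, hΦ, iterateFrobenius_def]
  have hpow2 : ∀ x : GaloisField 2 n, x ^ (2 ^ (2 * k) + 1) = Φ (Φ x) * x := fun x => by
    rw [pow_succ, hΦ, iterateFrobenius_def, iterateFrobenius_def, ← pow_mul, ← pow_add, two_mul]
  have hcT : T.card = 1 ∨ T.card = 2 ∨ T.card = 3 ∨ T.card = 4 ∨ T.card = 5 ∨ T.card = 6 := by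
    have := Finset.card_pos.mpr hT
    omega
  rcases hcT with h | h | h | h | h | h
  · -- card = 1
    obtain ⟨x1, S1, hm1, rfl, hc1⟩ := Finset.card_eq_succ.mp (show T.card = 0 + 1 by omega)
    have hS : S1 = ∅ := Finset.card_eq_zero.mp (by omega)
    subst hS
    rw [Finset.sum_insert hm1, Finset.sum_empty] at E0 E1 E2
    have h10 : x1 ≠ 0 := hT0 x1 (by simp)
    exact h10 (by linear_combination E0)
  · -- card = 2
    obtain ⟨x1, S1, hm1, rfl, hc1⟩ := Finset.card_eq_succ.mp (show T.card = 1 + 1 by omega)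
    obtain ⟨x2, S2, hm2, rfl, hc2⟩ := Finset.card_eq_succ.mp (show S1.card = 0 + 1 by omega)
    have hS : S2 = ∅ := Finset.card_eq_zero.mp (by omega)
    subst hS
    rw [Finset.sum_insert hm1, Finset.sum_insert hm2, Finset.sum_empty] at E0 E1 E2
    have hx12 : x1 ≠ x2 := fun h => hm1 (by rw [h]; simp)

    exact hx12 (by linear_combination E0 - x2 * htwo)
  · -- card = 3
    obtain ⟨x1, S1, hm1, rfl, hc1⟩ := Finset.card_eq_succ.mp (show T.card = 2 + 1 by omega)
    obtain ⟨x2, S2, hm2, rfl, hc2⟩ := Finset.card_eq_succ.mp (show S1.card = 1 + 1 by omega)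
    obtain ⟨x3, S3, hm3, rfl, hc3⟩ := Finset.card_eq_succ.mp (show S2.card = 0 + 1 by omega)
    have hS : S3 = ∅ := Finset.card_eq_zero.mp (by omega)
    subst hS
    rw [Finset.sum_insert hm1, Finset.sum_insert hm2, Finset.sum_insert hm3, Finset.sum_empty] at E0 E1 E2
    have hx12 : x1 ≠ x2 := fun h => hm1 (by rw [h]; simp)
    simp only [hpow1] at E1
    have hx3 : x3 = x1 + x2 := by linear_combination E0 - (x1 + x2) * htwo
    subst hx3
    simp only [map_add] at E1
    have hkey : Φ x1 * x2 = x1 * Φ x2 := by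
      linear_combination E1 - (Φ x1 * x1 + Φ x2 * (x1 + x2)) * htwo
    rw [hΦ, iterateFrobenius_def, iterateFrobenius_def] at hkey
    exact hx12 (aux_inj_sub hn0 hcs (hT0 x1 (by simp)) (hT0 x2 (by simp)) hkey)
  · -- card = 4
    obtain ⟨x1, S1, hm1, rfl, hc1⟩ := Finset.card_eq_succ.mp (show T.card = 3 + 1 by omega)
    obtain ⟨x2, S2, hm2, rfl, hc2⟩ := Finset.card_eq_succ.mp (show S1.card = 2 + 1 by omega)
    obtain ⟨x3, S3, hm3, rfl, hc3⟩ := Finset.card_eq_succ.mp (show S2.card = 1 + 1 by omega)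
    obtain ⟨x4, S4, hm4, rfl, hc4⟩ := Finset.card_eq_succ.mp (show S3.card = 0 + 1 by omega)
    have hS : S4 = ∅ := Finset.card_eq_zero.mp (by omega)
    subst hS
    rw [Finset.sum_insert hm1, Finset.sum_insert hm2, Finset.sum_insert hm3, Finset.sum_insert hm4, Finset.sum_empty] at E0 E1 E2
    have hx12 : x1 ≠ x2 := fun h => hm1 (by rw [h]; simp)
    have hx13 : x1 ≠ x3 := fun h => hm1 (by rw [h]; simp)
    have hx23 : x2 ≠ x3 := fun h => hm2 (by rw [h]; simp)
    simp only [hpow1] at E1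
    have hx4 : x4 = x1 + x2 + x3 := by linear_combination E0 - (x1 + x2 + x3) * htwo
    subst hx4
    simp only [map_add] at E1
    have hkey : Φ (x1 + x3) * (x2 + x3) = (x1 + x3) * Φ (x2 + x3) := by
      simp only [map_add]
      linear_combination E1 - (Φ x1 * x1 + Φ x2 * (x1 + x2 + x3) + Φ x3 * (x1 + x3)) * htwo
    have hA : x1 + x3 ≠ 0 := fun h => hx13 (by linear_combination h - x3 * htwo)
    have hB : x2 + x3 ≠ 0 := fun h => hx23 (by linear_combination h - x3 * htwo)
    rw [hΦ, iterateFrobenius_def, iterateFrobenius_def] at hkey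
    exact hx12 (by linear_combination (aux_inj_sub hn0 hcs hA hB hkey))
  · -- card = 5
    obtain ⟨x1, S1, hm1, rfl, hc1⟩ := Finset.card_eq_succ.mp (show T.card = 4 + 1 by omega)
    obtain ⟨x2, S2, hm2, rfl, hc2⟩ := Finset.card_eq_succ.mp (show S1.card = 3 + 1 by omega)
    obtain ⟨x3, S3, hm3, rfl, hc3⟩ := Finset.card_eq_succ.mp (show S2.card = 2 + 1 by omega)
    obtain ⟨x4, S4, hm4, rfl, hc4⟩ := Finset.card_eq_succ.mp (show S3.card = 1 + 1 by omega)
    obtain ⟨x5, S5, hm5, rfl, hc5⟩ := Finset.card_eq_succ.mp (show S4.card = 0 + 1 by omega)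
    have hS : S5 = ∅ := Finset.card_eq_zero.mp (by omega)
    subst hS
    rw [Finset.sum_insert hm1, Finset.sum_insert hm2, Finset.sum_insert hm3, Finset.sum_insert hm4, Finset.sum_insert hm5, Finset.sum_empty] at E0 E1 E2
    have hx12 : x1 ≠ x2 := fun h => hm1 (by rw [h]; simp)
    have hx13 : x1 ≠ x3 := fun h => hm1 (by rw [h]; simp)
    have hx14 : x1 ≠ x4 := fun h => hm1 (by rw [h]; simp)
    have hx23 : x2 ≠ x3 := fun h => hm2 (by rw [h]; simp)
    have hx24 : x2 ≠ x4 := fun h => hm2 (by rw [h]; simp)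
    have hx34 : x3 ≠ x4 := fun h => hm3 (by rw [h]; simp)
    have hx45 : x4 ≠ x5 := fun h => hm4 (by rw [h]; simp)
    have h40 : x4 ≠ 0 := hT0 x4 (by simp)
    have h50 : x5 ≠ 0 := hT0 x5 (by simp)
    simp only [hpow1] at E1
    simp only [hpow2] at E2
    have hx5 : x5 = x1 + x2 + x3 + x4 := by linear_combination E0 - (x1 + x2 + x3 + x4) * htwo
    subst hx5
    simp only [map_add] at E1 E2
    have h1 : Φ (x1 + x3) * (x2 + x3) + (x1 + x3) * Φ (x2 + x3) =
        Φ x4 * (x1 + x2 + x3 + x4) + x4 * Φ (x1 + x2 + x3 + x4) := by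
      simp only [map_add]
      linear_combination E1 - (Φ x1 * x1 + Φ x2 * x2 + (Φ x1 + Φ x2 + Φ x3 + Φ x4) * x4
        + Φ x4 * (x1 + x2 + x3 + x4)) * htwo
    have h2 : Φ (Φ (x1 + x3)) * (x2 + x3) + (x1 + x3) * Φ (Φ (x2 + x3)) =
        Φ (Φ x4) * (x1 + x2 + x3 + x4) + x4 * Φ (Φ (x1 + x2 + x3 + x4)) := by
      simp only [map_add]
      linear_combination E2 - (Φ (Φ x1) * x1 + Φ (Φ x2) * x2
        + (Φ (Φ x1) + Φ (Φ x2) + Φ (Φ x3) + Φ (Φ x4)) * x4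
        + Φ (Φ x4) * (x1 + x2 + x3 + x4)) * htwo
    have hA : x1 + x3 ≠ 0 := fun h => hx13 (by linear_combination h - x3 * htwo)
    have hB : x2 + x3 ≠ 0 := fun h => hx23 (by linear_combination h - x3 * htwo)
    have hAB : x1 + x3 ≠ x2 + x3 := fun h => hx12 (by linear_combination h)
    rcases (aux_ML hn0 hcs htwo hA hB hAB h40 h50 hx45 h1 h2).2 with h | h | h
    · exact hx24 (by linear_combination h - x4 * htwo)
    · exact hx14 (by linear_combination h - x4 * htwo)
    · exact hx34 (by linear_combination -h)
  · -- card = 6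
    obtain ⟨x1, S1, hm1, rfl, hc1⟩ := Finset.card_eq_succ.mp (show T.card = 5 + 1 by omega)
    obtain ⟨x2, S2, hm2, rfl, hc2⟩ := Finset.card_eq_succ.mp (show S1.card = 4 + 1 by omega)
    obtain ⟨x3, S3, hm3, rfl, hc3⟩ := Finset.card_eq_succ.mp (show S2.card = 3 + 1 by omega)
    obtain ⟨x4, S4, hm4, rfl, hc4⟩ := Finset.card_eq_succ.mp (show S3.card = 2 + 1 by omega)
    obtain ⟨x5, S5, hm5, rfl, hc5⟩ := Finset.card_eq_succ.mp (show S4.card = 1 + 1 by omega)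
    obtain ⟨x6, S6, hm6, rfl, hc6⟩ := Finset.card_eq_succ.mp (show S5.card = 0 + 1 by omega)
    have hS : S6 = ∅ := Finset.card_eq_zero.mp (by omega)
    subst hS
    rw [Finset.sum_insert hm1, Finset.sum_insert hm2, Finset.sum_insert hm3, Finset.sum_insert hm4, Finset.sum_insert hm5, Finset.sum_insert hm6, Finset.sum_empty] at E0 E1 E2
    have hx12 : x1 ≠ x2 := fun h => hm1 (by rw [h]; simp)
    have hx13 : x1 ≠ x3 := fun h => hm1 (by rw [h]; simp)
    have hx14 : x1 ≠ x4 := fun h => hm1 (by rw [h]; simp)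
    have hx23 : x2 ≠ x3 := fun h => hm2 (by rw [h]; simp)
    have hx24 : x2 ≠ x4 := fun h => hm2 (by rw [h]; simp)
    have hx34 : x3 ≠ x4 := fun h => hm3 (by rw [h]; simp)
    have hx45 : x4 ≠ x5 := fun h => hm4 (by rw [h]; simp)
    have hx46 : x4 ≠ x6 := fun h => hm4 (by rw [h]; simp)
    have hx56 : x5 ≠ x6 := fun h => hm5 (by rw [h]; simp)
    simp only [hpow1] at E1
    simp only [hpow2] at E2
    have hx6 : x6 = x1 + x2 + x3 + x4 + x5 := by
      linear_combination E0 - (x1 + x2 + x3 + x4 + x5) * htwo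
    subst hx6
    simp only [map_add] at E1 E2
    have h1 : Φ (x1 + x3) * (x2 + x3) + (x1 + x3) * Φ (x2 + x3) =
        Φ (x1 + x2 + x3 + x5) * (x1 + x2 + x3 + x4)
          + (x1 + x2 + x3 + x5) * Φ (x1 + x2 + x3 + x4) := by
      simp only [map_add]
      linear_combination E1 - ((Φ x1 + Φ x2 + Φ x3 + Φ x4 + Φ x5) * (x1 + x2 + x3 + x4 + x5)
        + Φ x1 * x1 + Φ x2 * x2) * htwo
    have h2 : Φ (Φ (x1 + x3)) * (x2 + x3) + (x1 + x3) * Φ (Φ (x2 + x3)) =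
        Φ (Φ (x1 + x2 + x3 + x5)) * (x1 + x2 + x3 + x4)
          + (x1 + x2 + x3 + x5) * Φ (Φ (x1 + x2 + x3 + x4)) := by
      simp only [map_add]
      linear_combination E2 - ((Φ (Φ x1) + Φ (Φ x2) + Φ (Φ x3) + Φ (Φ x4) + Φ (Φ x5))
          * (x1 + x2 + x3 + x4 + x5)
        + Φ (Φ x1) * x1 + Φ (Φ x2) * x2) * htwo
    have hA : x1 + x3 ≠ 0 := fun h => hx13 (by linear_combination h - x3 * htwo)
    have hB : x2 + x3 ≠ 0 := fun h => hx23 (by linear_combination h - x3 * htwo)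
    have hAB : x1 + x3 ≠ x2 + x3 := fun h => hx12 (by linear_combination h)
    have hC : x1 + x2 + x3 + x5 ≠ 0 := fun h => hx46 (by linear_combination -h)
    have hD : x1 + x2 + x3 + x4 ≠ 0 := fun h => hx56 (by linear_combination -h)
    have hCD : x1 + x2 + x3 + x5 ≠ x1 + x2 + x3 + x4 := fun h => hx45 (by linear_combination -h)
    rcases (aux_ML hn0 hcs htwo hA hB hAB hC hD hCD h1 h2).2 with h | h | h
    · exact hx24 (by linear_combination h - x4 * htwo)
    · exact hx14 (by linear_combination h - x4 * htwo)
    · exact hx34 (by linear_combination -h)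


end FieldLemmas
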